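/- Let p be real with 7/8 ≤ p ≤ 1. Then the sequence C_n(p) converges to 2(1−p)/(2p−1) as n → ∞. -/
import Mathlib


open Filter

set_option maxHeartbeats 1000000


private lemma fitch_clow (p a b : ℝ) (hp1 : 7/8 ≤ p) (hp2 : p ≤ 1)
    (hb : 0 ≤ b) (hd : b ≤ a) (hc : 0 ≤ 1 - a - b) :
    (1-p)/p ≤ (1-a-b)^2 + 2*(p*a+(1-p)*b)*((1-p)*a+p*b) := by
  have hp0 : (0:ℝ) < p := by linarith
  have h3 : (a-b)^2 ≤ (a+b)^2 := by nlinarith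
  have h4 : 0 ≤ 2*(p*a+(1-p)*b)*((1-p)*a+p*b) - 2*p*(1-p)*(a+b)^2 := by
    nlinarith [mul_nonneg (sq_nonneg (2*p-1)) (sub_nonneg.2 h3)]
  rw [div_le_iff₀ hp0]
  nlinarith [(by nlinarith : (0:ℝ) ≤ 1+2*p*(1-p)),
    sq_nonneg ((1+2*p*(1-p))*(1-a-b) - 2*p*(1-p)),
    mul_nonneg (by linarith : (0:ℝ) ≤ 1-p) (by nlinarith : (0:ℝ) ≤ 4*p^2-2*p-1),
    mul_nonneg (mul_nonneg hp0.le (by nlinarith : (0:ℝ) ≤ 1+2*p*(1-p))) h4,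
    mul_nonneg hp0.le h4]

private lemma fitch_step (p a1 b1 a2 b2 : ℝ)
    (hp1 : 7/8 ≤ p) (hp2 : p ≤ 1)
    (hb1 : (1-p)^2 ≤ b1) (hd1 : b1 ≤ a1)
    (hc1l : (1-p)/p ≤ 1 - a1 - b1) (hc1u : 1 - a1 - b1 ≤ 1/2)
    (hb2 : 0 ≤ b2) (hd2 : b2 ≤ a2)
    (hc2l : (1-p)/p ≤ 1 - a2 - b2) (hc2u : 1 - a2 - b2 ≤ 1/2)
    (hda : a2 ≤ a1) (hdb : b1 ≤ b2) :
    (p*a2+(1-p)*b2)^2 + 2*(p*a2+(1-p)*b2)*(1-a2-b2)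
      ≤ (p*a1+(1-p)*b1)^2 + 2*(p*a1+(1-p)*b1)*(1-a1-b1)
    ∧ ((1-p)*a1+p*b1)^2 + 2*((1-p)*a1+p*b1)*(1-a1-b1)
      ≤ ((1-p)*a2+p*b2)^2 + 2*((1-p)*a2+p*b2)*(1-a2-b2) := by
  have hp0 : (0:ℝ) < p := by linarith
  have hb1' : (0:ℝ) ≤ b1 := le_trans (sq_nonneg _) hb1
  have hc1l' : 1 - p ≤ p * (1 - a1 - b1) := by
    rw [div_le_iff₀ hp0] at hc1l; linarith [hc1l]
  have hc2l' : 1 - p ≤ p * (1 - a2 - b2) := by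
    rw [div_le_iff₀ hp0] at hc2l; linarith [hc2l]
  have hc1nn : (0:ℝ) ≤ 1 - a1 - b1 := by nlinarith
  have hc2nn : (0:ℝ) ≤ 1 - a2 - b2 := by nlinarith
  have ha1le : a1 ≤ 1 := by linarith
  have ha2le : a2 ≤ 1 := by linarith
  have hA1 : 0 ≤ p*(1-a1-b1) - (1-p)*(p*a2+(1-p)*b2) := by nlinarith
  have hA2 : 0 ≤ p*(p*a2+(1-p)*b2) - (1-p)*(1-a1-b1) := by nlinarith
  have hB1 : 0 ≤ p*(1-a2-b2) - (1-p)*((1-p)*a1+p*b1) := by nlinarith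
  have hB2 : 0 ≤ p*((1-p)*a1+p*b1) - (1-p)*(1-a2-b2) := by
    have m1 : 0 ≤ p*(1-p)*(1/2 - (1-a1-b1)) :=
      mul_nonneg (mul_nonneg hp0.le (by linarith)) (by linarith)
    have m2 : 0 ≤ p*(2*p-1)*(b1 - (1-p)^2) :=
      mul_nonneg (mul_nonneg hp0.le (by linarith)) (by linarith)
    have m3 : 0 ≤ (1-p)*(1/2 - (1-a2-b2)) := mul_nonneg (by linarith) (by linarith)
    have m4 : 0 ≤ (1-p)^2*(4*p^2-2*p-1) := mul_nonneg (sq_nonneg _) (by nlinarith)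
    linarith [m1, m2, m3, m4]
  constructor
  · nlinarith [sq_nonneg (p*(a1-a2) - (1-p)*(b2-b1)),
      mul_nonneg (by linarith : (0:ℝ) ≤ a1 - a2) hA1,
      mul_nonneg (by linarith : (0:ℝ) ≤ b2 - b1) hA2]
  · nlinarith [sq_nonneg (p*(b2-b1) - (1-p)*(a1-a2)),
      mul_nonneg (by linarith : (0:ℝ) ≤ b2 - b1) hB1,
      mul_nonneg (by linarith : (0:ℝ) ≤ a1 - a2) hB2]

/-- For 7/8 ≤ p ≤ 1, C_n converges to 2(1-p)/(2p-1). -/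
theorem fitch_C_tendsto
    (p : ℝ) (C D : ℕ → ℝ)
    (hC0 : C 0 = 0) (hD0 : D 0 = 1)
    (hC : ∀ n, 2 * C (n + 1) =
        1 - 2 * C n + 3 * (C n) ^ 2 - (2 * p - 1) ^ 2 * (D n) ^ 2)
    (hD : ∀ n, D (n + 1) = (2 * p - 1) * (1 + C n) * D n)
    (hp1 : 7 / 8 ≤ p) (hp2 : p ≤ 1) :
    Tendsto C atTop (nhds (2 * (1 - p) / (2 * p - 1))) := by
  have hp0 : (0:ℝ) < p := by linarith
  have hq0 : (0:ℝ) < 2*p-1 := by linarith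
  set a : ℕ → ℝ := fun n => (1 - C n + D n)/2 with hadef
  set b : ℕ → ℝ := fun n => (1 - C n - D n)/2 with hbdef
  have hCab : ∀ n, C n = 1 - a n - b n := fun n => by simp only [hadef, hbdef]; ring
  have hDab : ∀ n, D n = a n - b n := fun n => by simp only [hadef, hbdef]; ring
  have hra : ∀ n, a (n+1)
      = (p*a n+(1-p)*b n)^2 + 2*(p*a n+(1-p)*b n)*(1 - a n - b n) := by
    intro n
    simp only [hadef, hbdef]
    linear_combination (hD n)/2 - (hC n)/4
  have hrb : ∀ n, b (n+1)
      = ((1-p)*a n+p*b n)^2 + 2*((1-p)*a n+p*b n)*(1 - a n - b n) := by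
    intro n
    simp only [hadef, hbdef]
    linear_combination (-(1:ℝ)/2)*(hD n) - (hC n)/4
  have inv : ∀ n, 0 ≤ b n ∧ b n ≤ a n ∧ 0 ≤ 1 - a n - b n ∧ 1 - a n - b n ≤ 1/2 := by
    intro n
    induction n with
    | zero =>
      simp only [hadef, hbdef, hC0, hD0]
      norm_num
    | succ n ih =>
      obtain ⟨ib, id, icl, icu⟩ := ih
      have hBnn : 0 ≤ (1-p)*a n+p*b n := by nlinarith
      have hAnn : 0 ≤ p*a n+(1-p)*b n := by nlinarith
      rw [hra n, hrb n]
      have hdiff : 0 ≤ ((p*a n+(1-p)*b n) - ((1-p)*a n+p*b n)) := by nlinarith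
      have hsum : 0 ≤ ((p*a n+(1-p)*b n) + ((1-p)*a n+p*b n) + 2*(1 - a n - b n)) := by nlinarith
      refine ⟨by nlinarith, by nlinarith [mul_nonneg hdiff hsum],
        by nlinarith [mul_nonneg hAnn hBnn], ?_⟩
      have h23 : 0 ≤ (1 - a n - b n)*(2/3 - (1 - a n - b n)) :=
        mul_nonneg icl (by linarith)
      nlinarith [sq_nonneg ((p*a n+(1-p)*b n) - ((1-p)*a n+p*b n))]
  have hclow : ∀ n, (1-p)/p ≤ 1 - a (n+1) - b (n+1) := by
    intro n
    obtain ⟨ib, id, icl, _⟩ := inv n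
    have h := fitch_clow p (a n) (b n) hp1 hp2 ib id icl
    rw [hra n, hrb n]
    nlinarith [h]
  have ha1 : a 1 = p^2 := by
    have h1 := hC 0; have h2 := hD 0
    rw [hC0, hD0] at h1 h2
    simp only [hadef, hbdef]
    linear_combination h2/2 - h1/4
  have hb1 : b 1 = (1-p)^2 := by
    have h1 := hC 0; have h2 := hD 0
    rw [hC0, hD0] at h1 h2
    simp only [hadef, hbdef]
    linear_combination (-(1:ℝ)/2)*h2 - h1/4
  have mono : ∀ n, a (n+2) ≤ a (n+1) ∧ b (n+1) ≤ b (n+2) ∧ (1-p)^2 ≤ b (n+1) := by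
    intro n
    induction n with
    | zero =>
      refine ⟨?_, ?_, le_of_eq hb1.symm⟩
      · rw [hra 1, ha1, hb1]
        nlinarith [mul_nonneg (sq_nonneg (1-p)) (by nlinarith : (0:ℝ) ≤ 3*p^2-1)]
      · rw [hrb 1, ha1, hb1]
        nlinarith [mul_nonneg (sq_nonneg (1-p)) (by nlinarith : (0:ℝ) ≤ 5*p^2-1)]
    | succ n ih =>
      obtain ⟨iha, ihb, ihb1⟩ := ih
      have r := fitch_step p (a (n+1)) (b (n+1)) (a (n+2)) (b (n+2)) hp1 hp2
        ihb1 (inv (n+1)).2.1 (hclow n) (inv (n+1)).2.2.2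
        (inv (n+2)).1 (inv (n+2)).2.1 (hclow (n+1)) (inv (n+2)).2.2.2 iha ihb
      refine ⟨?_, ?_, le_trans ihb1 ihb⟩
      · exact le_trans (le_of_eq (hra (n+2))) (le_trans r.1 (le_of_eq (hra (n+1)).symm))
      · exact le_trans (le_of_eq (hrb (n+1))) (le_trans r.2 (le_of_eq (hrb (n+2)).symm))
  -- convergence of a and b
  have haanti : Antitone fun n => a (n+1) := antitone_nat_of_succ_le fun n => (mono n).1
  have hbmono : Monotone fun n => b (n+1) := monotone_nat_of_le_succ fun n => (mono n).2.1
  obtain ⟨α, hα⟩ : ∃ x, Tendsto (fun n => a (n+1)) atTop (nhds x) := by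
    rcases tendsto_of_antitone haanti with h | h
    · exfalso
      obtain ⟨n, hn⟩ := (h.eventually (eventually_le_atBot (-1))).exists
      have h1 := (inv (n+1)).1; have h2 := (inv (n+1)).2.1
      have hn' : a (n+1) ≤ -1 := hn
      linarith
    · exact h
  obtain ⟨β, hβ⟩ : ∃ x, Tendsto (fun n => b (n+1)) atTop (nhds x) := by
    rcases tendsto_of_monotone hbmono with h | h
    · exfalso
      obtain ⟨n, hn⟩ := (h.eventually (eventually_ge_atTop 2)).exists
      have h1 := (inv (n+1)).2.1; have h2 := (inv (n+1)).2.2.1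
      have hn' : (2:ℝ) ≤ b (n+1) := hn
      linarith
    · exact h
  have hCsh : Tendsto (fun n => C (n+1)) atTop (nhds (1 - α - β)) := by
    have h1 : Tendsto (fun n => 1 - a (n+1) - b (n+1)) atTop (nhds (1 - α - β)) :=
      (tendsto_const_nhds.sub hα).sub hβ
    exact h1.congr fun n => (hCab (n+1)).symm
  have hDsh : Tendsto (fun n => D (n+1)) atTop (nhds (α - β)) := by
    have h1 : Tendsto (fun n => a (n+1) - b (n+1)) atTop (nhds (α - β)) := hα.sub hβ
    exact h1.congr fun n => (hDab (n+1)).symm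
  have hCt : Tendsto C atTop (nhds (1 - α - β)) := (tendsto_add_atTop_iff_nat 1).mp hCsh
  have hDt : Tendsto D atTop (nhds (α - β)) := (tendsto_add_atTop_iff_nat 1).mp hDsh
  set γ := 1 - α - β with hγdef
  set δ := α - β with hδdef
  -- limit equations
  have hEqD : δ = (2*p-1)*(1+γ)*δ := by
    have hr : Tendsto (fun n => (2*p-1)*(1+C n)*D n) atTop (nhds ((2*p-1)*(1+γ)*δ)) :=
      ((tendsto_const_nhds.mul (tendsto_const_nhds.add hCt))).mul hDt
    exact tendsto_nhds_unique hDsh (hr.congr fun n => (hD n).symm)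
  have hEqC : 2*γ = 1 - 2*γ + 3*γ^2 - (2*p-1)^2*δ^2 := by
    have hl : Tendsto (fun n => 2 * C (n+1)) atTop (nhds (2*γ)) := tendsto_const_nhds.mul hCsh
    have hr : Tendsto (fun n => 1 - 2*C n + 3*(C n)^2 - (2*p-1)^2*(D n)^2) atTop
        (nhds (1 - 2*γ + 3*γ^2 - (2*p-1)^2*δ^2)) :=
      ((tendsto_const_nhds.sub (tendsto_const_nhds.mul hCt)).add
        (tendsto_const_nhds.mul (hCt.pow 2))).sub (tendsto_const_nhds.mul (hDt.pow 2))
    exact tendsto_nhds_unique hl (hr.congr fun n => (hC n).symm)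
  have hDnn : ∀ n, 0 ≤ D n := fun n => by rw [hDab n]; linarith [(inv n).2.1]
  have hδ0 : 0 ≤ δ := ge_of_tendsto' hDt hDnn
  have hγle : γ ≤ 1/2 := le_of_tendsto' hCt fun n => by
    rw [hCab n]; linarith [(inv n).2.2.2]
  rcases eq_or_lt_of_le hδ0 with hδ | hδ
  · -- δ = 0
    have hfac : (3*γ - 1)*(γ - 1) = 0 := by
      have hz : (2*p-1)^2*δ^2 = 0 := by rw [← hδ]; ring
      linear_combination -hEqC + hz
    rcases mul_eq_zero.mp hfac with h | h
    · rcases eq_or_lt_of_le hp1 with hp78 | hp78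
      · have hval : 2 * (1 - p) / (2 * p - 1) = γ := by
          rw [← hp78]; norm_num; linarith
        rw [hval]; exact hCt
      · exfalso
        have hq34 : 3/4 < 2*p-1 := by linarith
        have hγ13 : γ = 1/3 := by linarith
        have hc0 : 1/(2*p-1) - 1 < γ := by
          rw [hγ13]
          have h4 : 1/(2*p-1) < 4/3 := by
            rw [div_lt_iff₀ hq0]; linarith
          linarith
        have hev : ∀ᶠ n in atTop, 1/(2*p-1) - 1 < C n := hCt (Ioi_mem_nhds hc0)
        obtain ⟨N, hN⟩ := eventually_atTop.mp hev
        have hDpos : ∀ n, 0 < D n := by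
          intro n
          induction n with
          | zero => rw [hD0]; norm_num
          | succ n ih =>
            rw [hD n]
            have hCnn : 0 ≤ C n := by rw [hCab n]; exact (inv n).2.2.1
            positivity
        have hgrow : ∀ m, N ≤ m → D N ≤ D m := by
          intro m hm
          induction m, hm using Nat.le_induction with
          | base => exact le_refl _
          | succ m hm ih =>
            rw [hD m]
            have hCm := hN m hm
            have h1 : 1 ≤ (2*p-1)*(1+C m) := by
              have : (2*p-1) * (1/(2*p-1)) = 1 := mul_one_div_cancel (ne_of_gt hq0)
              nlinarith [hCm]
            nlinarith [hDpos m, ih]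
        have hδge : D N ≤ δ := ge_of_tendsto hDt (eventually_atTop.mpr ⟨N, hgrow⟩)
        linarith [hDpos N]
    · linarith
  · -- δ > 0
    have h2 : ((2*p-1)*(1+γ) - 1)*δ = 0 := by linear_combination -hEqD
    have h1 : (2*p-1)*(1+γ) - 1 = 0 := by
      rcases mul_eq_zero.mp h2 with h | h
      · exact h
      · exact absurd h (ne_of_gt hδ)
    have hγval : 2 * (1 - p) / (2 * p - 1) = γ := by
      rw [div_eq_iff (ne_of_gt hq0)]
      linear_combination -h1
    rw [hγval]; exact hCt
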